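/- Let d ≥ 1, let Λ > 0, let C be a symmetric positive-definite real d×d matrix all of whose eigenvalues are at most Λ, and let t ≥ 0. Set A = (I + t·C)^{−1}. Then ∫_{ℝ^d} ((1/d)·⟪x, A·x⟫ − (1/d)·Tr(A·C))² · p_C(x) dx ≤ 2·Λ²/d. -/

import Mathlib

open MeasureTheory Matrix

/-- Centered multivariate Gaussian density on ℝ^d with covariance matrix `C`. -/
noncomputable def gaussDensity (d : ℕ) (C : Matrix (Fin d) (Fin d) ℝ)
    (y : Fin d → ℝ) : ℝ :=
  ((2 * Real.pi) ^ d * C.det) ^ (-(1 / 2 : ℝ)) *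
    Real.exp (-(1 / 2) * (y ⬝ᵥ C⁻¹.mulVec y))

open MeasureTheory Matrix Real Set

/-! ### One-dimensional Gaussian moment lemmas -/

lemma integral_even_eq_two_mul {f : ℝ → ℝ} (hf : ∀ x, f (-x) = f x) (hi : Integrable f) :
    ∫ x : ℝ, f x = 2 * ∫ x in Ioi (0:ℝ), f x := by
  have h1 : (∫ x in Iic (0:ℝ), f x) + (∫ x in Ioi (0:ℝ), f x) = ∫ x : ℝ, f x :=
    intervalIntegral.integral_Iic_add_Ioi hi.integrableOn hi.integrableOn
  have h2 : (∫ x in Iic (0:ℝ), f x) = ∫ x in Ioi (0:ℝ), f x := by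
    rw [← neg_zero, ← integral_comp_neg_Iic]
    simp_rw [hf]
    rw [neg_zero]
  linarith

lemma moment_Ioi (n : ℕ) : ∫ x in Ioi (0:ℝ), x ^ n * Real.exp (-(1/2) * x ^ 2)
    = (1/2 : ℝ) ^ (-((n:ℝ) + 1) / 2) * (1 / 2) * Real.Gamma (((n:ℝ) + 1) / 2) := by
  rw [← integral_rpow_mul_exp_neg_mul_rpow (by norm_num)
    (neg_one_lt_zero.trans_le (Nat.cast_nonneg n)) (by norm_num : (0:ℝ) < 1/2)]
  refine setIntegral_congr_fun measurableSet_Ioi (fun x hx => ?_)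
  rw [Real.rpow_natCast, Real.rpow_two]

lemma rpow_half_32 : ((1:ℝ)/2) ^ (-(((2:ℕ):ℝ) + 1) / 2) = 2 * Real.sqrt 2 := by
  have : (-(((2:ℕ):ℝ) + 1) / 2) = -(3/2 : ℝ) := by norm_num
  rw [this, one_div, Real.inv_rpow (by norm_num), Real.rpow_neg (by norm_num), inv_inv,
    show (3/2 : ℝ) = 1 + 1/2 by norm_num, Real.rpow_add (by norm_num), Real.rpow_one,
    ← Real.sqrt_eq_rpow]

lemma rpow_half_52 : ((1:ℝ)/2) ^ (-(((4:ℕ):ℝ) + 1) / 2) = 4 * Real.sqrt 2 := by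
  have : (-(((4:ℕ):ℝ) + 1) / 2) = -(5/2 : ℝ) := by norm_num
  rw [this, one_div, Real.inv_rpow (by norm_num), Real.rpow_neg (by norm_num), inv_inv,
    show (5/2 : ℝ) = 2 + 1/2 by norm_num, Real.rpow_add (by norm_num), ← Real.sqrt_eq_rpow,
    show (2:ℝ) = ((2:ℕ):ℝ) by norm_num, Real.rpow_natCast]
  norm_num

lemma gamma32 : Real.Gamma ((((2:ℕ):ℝ) + 1) / 2) = Real.sqrt π / 2 := by
  rw [show ((((2:ℕ):ℝ)) + 1) / 2 = 1/2 + 1 by norm_num, Real.Gamma_add_one (by norm_num),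
    Real.Gamma_one_half_eq]
  ring

lemma gamma52 : Real.Gamma ((((4:ℕ):ℝ) + 1) / 2) = 3 * Real.sqrt π / 4 := by
  rw [show ((((4:ℕ):ℝ)) + 1) / 2 = 3/2 + 1 by norm_num, Real.Gamma_add_one (by norm_num),
    show (3/2:ℝ) = 1/2 + 1 by norm_num, Real.Gamma_add_one (by norm_num), Real.Gamma_one_half_eq]
  ring

lemma integrable_pow_gauss (n : ℕ) :
    Integrable (fun x : ℝ => x ^ n * Real.exp (-(1/2) * x ^ 2)) := by
  have := integrable_rpow_mul_exp_neg_mul_sq (b := 1/2) (by norm_num) (s := (n:ℝ))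
    (neg_one_lt_zero.trans_le (Nat.cast_nonneg n))
  simpa [Real.rpow_natCast] using this

lemma sqrt_two_pi : Real.sqrt (2 * π) = Real.sqrt 2 * Real.sqrt π :=
  Real.sqrt_mul (by norm_num) _

lemma gauss_int0 : ∫ x : ℝ, Real.exp (-(1/2) * x ^ 2) = Real.sqrt (2 * π) := by
  rw [integral_gaussian]
  congr 1
  field_simp

lemma gauss_int2 : ∫ x : ℝ, x ^ 2 * Real.exp (-(1/2) * x ^ 2) = Real.sqrt (2 * π) := by
  rw [integral_even_eq_two_mul (fun x => by ring_nf) (integrable_pow_gauss 2), moment_Ioi 2,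
    rpow_half_32, gamma32, sqrt_two_pi]
  ring

lemma gauss_int4 : ∫ x : ℝ, x ^ 4 * Real.exp (-(1/2) * x ^ 2) = 3 * Real.sqrt (2 * π) := by
  rw [integral_even_eq_two_mul (fun x => by ring_nf) (integrable_pow_gauss 4), moment_Ioi 4,
    rpow_half_52, gamma52, sqrt_two_pi]
  ring

/-! ### Standard Gaussian density facts -/

noncomputable def stdGauss (s : ℝ) : ℝ := (Real.sqrt (2 * π))⁻¹ * Real.exp (-(1/2) * s ^ 2)

lemma sqrt_two_pi_pos : 0 < Real.sqrt (2 * π) := Real.sqrt_pos.mpr (by positivity)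

lemma stdGauss_int : Integrable stdGauss := by
  have := (integrable_pow_gauss 0).const_mul (Real.sqrt (2 * π))⁻¹
  refine this.congr ?_
  filter_upwards with s
  simp [stdGauss]

lemma stdGauss_int1 : Integrable (fun s : ℝ => (s ^ 2 - 1) * stdGauss s) := by
  have : (fun s : ℝ => (s ^ 2 - 1) * stdGauss s)
      = fun s => (Real.sqrt (2 * π))⁻¹ * (s ^ 2 * Real.exp (-(1/2) * s ^ 2)
          - Real.exp (-(1/2) * s ^ 2)) := by
    funext s; simp only [stdGauss]; ring
  rw [this]
  exact (((integrable_pow_gauss 2).sub (by simpa using integrable_pow_gauss 0)).const_mul _)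

lemma stdGauss_int2 : Integrable (fun s : ℝ => (s ^ 2 - 1) ^ 2 * stdGauss s) := by
  have : (fun s : ℝ => (s ^ 2 - 1) ^ 2 * stdGauss s)
      = fun s => (Real.sqrt (2 * π))⁻¹ * (s ^ 4 * Real.exp (-(1/2) * s ^ 2)
          - 2 * (s ^ 2 * Real.exp (-(1/2) * s ^ 2)) + Real.exp (-(1/2) * s ^ 2)) := by
    funext s; simp only [stdGauss]; ring
  rw [this]
  exact ((((integrable_pow_gauss 4).sub ((integrable_pow_gauss 2).const_mul 2)).add
    (by simpa using integrable_pow_gauss 0)).const_mul _)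

lemma stdGauss_I0 : ∫ s : ℝ, stdGauss s = 1 := by
  simp only [stdGauss]
  rw [integral_const_mul, gauss_int0, inv_mul_cancel₀ sqrt_two_pi_pos.ne']

lemma stdGauss_I1 : ∫ s : ℝ, (s ^ 2 - 1) * stdGauss s = 0 := by
  have h : (fun s : ℝ => (s ^ 2 - 1) * stdGauss s)
      = fun s => (Real.sqrt (2 * π))⁻¹ * (s ^ 2 * Real.exp (-(1/2) * s ^ 2)
          - Real.exp (-(1/2) * s ^ 2)) := by
    funext s; simp only [stdGauss]; ring
  rw [h, integral_const_mul, integral_sub (integrable_pow_gauss 2)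
    (by simpa using integrable_pow_gauss 0), gauss_int2, gauss_int0]
  simp

lemma stdGauss_I2 : ∫ s : ℝ, (s ^ 2 - 1) ^ 2 * stdGauss s = 2 := by
  have h : (fun s : ℝ => (s ^ 2 - 1) ^ 2 * stdGauss s)
      = fun s => (Real.sqrt (2 * π))⁻¹ * (s ^ 4 * Real.exp (-(1/2) * s ^ 2)
          - 2 * (s ^ 2 * Real.exp (-(1/2) * s ^ 2)) + Real.exp (-(1/2) * s ^ 2)) := by
    funext s; simp only [stdGauss]; ring
  rw [h, integral_const_mul, integral_add (f := fun x : ℝ => x ^ 4 * Real.exp (-(1/2) * x ^ 2)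
        - 2 * (x ^ 2 * Real.exp (-(1/2) * x ^ 2)))
      (((integrable_pow_gauss 4).sub
      ((integrable_pow_gauss 2).const_mul 2))) (by simpa using integrable_pow_gauss 0),
    integral_sub (integrable_pow_gauss 4) ((integrable_pow_gauss 2).const_mul 2),
    integral_const_mul, gauss_int4, gauss_int2, gauss_int0]
  have hc := sqrt_two_pi_pos.ne'
  field_simp
  ring

/-! ### Matrix algebra helpers -/

section MatrixHelpers

variable {d : ℕ} (U : Matrix (Fin d) (Fin d) ℝ)

lemma conj_diag_mul (hU2 : Uᵀ * U = 1) (f g : Fin d → ℝ) :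
    (U * diagonal f * Uᵀ) * (U * diagonal g * Uᵀ) = U * diagonal (fun i => f i * g i) * Uᵀ := by
  calc (U * diagonal f * Uᵀ) * (U * diagonal g * Uᵀ)
      = U * (diagonal f * ((Uᵀ * U) * (diagonal g * Uᵀ))) := by
        simp only [Matrix.mul_assoc]
    _ = U * diagonal (fun i => f i * g i) * Uᵀ := by
        rw [hU2, Matrix.one_mul, ← Matrix.mul_assoc, ← Matrix.mul_assoc,
          Matrix.mul_assoc U, diagonal_mul_diagonal]

lemma conj_one (hU1 : U * Uᵀ = 1) : U * diagonal (fun _ : Fin d => (1:ℝ)) * Uᵀ = 1 := by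
  rw [show (diagonal fun _ : Fin d => (1:ℝ)) = 1 from diagonal_one, Matrix.mul_one, hU1]

lemma conj_inv' (hU1 : U * Uᵀ = 1) (hU2 : Uᵀ * U = 1) (f : Fin d → ℝ) (hf : ∀ i, f i ≠ 0) :
    (U * diagonal f * Uᵀ)⁻¹ = U * diagonal (fun i => (f i)⁻¹) * Uᵀ := by
  apply Matrix.inv_eq_right_inv
  rw [conj_diag_mul U hU2]
  rw [show (fun i => f i * (f i)⁻¹) = fun _ : Fin d => (1:ℝ)
    from funext fun i => mul_inv_cancel₀ (hf i)]
  exact conj_one U hU1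

lemma one_add_smul_eq (lam : Fin d → ℝ) (t : ℝ) (hU1 : U * Uᵀ = 1) :
    1 + t • (U * diagonal lam * Uᵀ) = U * diagonal (fun i => 1 + t * lam i) * Uᵀ := by
  have : (diagonal fun i => 1 + t * lam i) = 1 + t • diagonal lam := by
    rw [← diagonal_one, ← diagonal_smul, ← diagonal_add]
    congr 1
  rw [this, Matrix.mul_add, Matrix.add_mul, Matrix.mul_one,
    Matrix.mul_smul, Matrix.smul_mul, hU1]

lemma quad_form_eq (M N : Matrix (Fin d) (Fin d) ℝ) (z : Fin d → ℝ) :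
    (M *ᵥ z) ⬝ᵥ (N *ᵥ (M *ᵥ z)) = z ⬝ᵥ ((Mᵀ * N * M) *ᵥ z) := by
  rw [mulVec_mulVec, ← vecMul_transpose, dotProduct_mulVec, vecMul_vecMul,
    dotProduct_mulVec, Matrix.mul_assoc]

lemma dot_diag (w z : Fin d → ℝ) : z ⬝ᵥ (diagonal w *ᵥ z) = ∑ i, w i * z i ^ 2 := by
  simp only [dotProduct, mulVec_diagonal]
  exact Finset.sum_congr rfl fun i _ => by ring

lemma trace_conj (hU2 : Uᵀ * U = 1) (f : Fin d → ℝ) :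
    (U * diagonal f * Uᵀ).trace = ∑ i, f i := by
  rw [Matrix.trace_mul_comm, ← Matrix.mul_assoc, hU2, Matrix.one_mul, Matrix.trace_diagonal]

lemma cont_quad (N : Matrix (Fin d) (Fin d) ℝ) :
    Continuous fun y : Fin d → ℝ => y ⬝ᵥ (N *ᵥ y) := by
  simp only [dotProduct, mulVec]
  exact continuous_finset_sum _ fun i _ => (continuous_apply i).mul
    (continuous_finset_sum _ fun j _ => continuous_const.mul (continuous_apply j))

end MatrixHelpers

theorem gaussian_quadratic_concentration (d : ℕ) (hd : 1 ≤ d) (Λ : ℝ) (hΛ : 0 < Λ)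
    (C : Matrix (Fin d) (Fin d) ℝ) (hC : C.PosDef) (hCsymm : C.IsSymm)
    (heig : ∀ i : Fin d, hC.isHermitian.eigenvalues i ≤ Λ)
    (t : ℝ) (ht : 0 ≤ t) :
    ∫ x : Fin d → ℝ,
        ((1 / (d : ℝ)) * (x ⬝ᵥ ((1 + t • C)⁻¹).mulVec x)
          - (1 / (d : ℝ)) * ((1 + t • C)⁻¹ * C).trace) ^ 2 * gaussDensity d C x
      ≤ 2 * Λ ^ 2 / (d : ℝ) := by
  classical
  have hd0 : (0:ℝ) < d := by exact_mod_cast Nat.lt_of_lt_of_le Nat.zero_lt_one hd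
  set lam : Fin d → ℝ := hC.isHermitian.eigenvalues with hlam_def
  set U : Matrix (Fin d) (Fin d) ℝ := (hC.isHermitian.eigenvectorUnitary : Matrix (Fin d) (Fin d) ℝ) with hU_def
  have hlam : ∀ i, 0 < lam i := hC.eigenvalues_pos
  have hU1 : U * Uᵀ = 1 := by
    have h1 := Matrix.mem_unitaryGroup_iff.mp (hC.isHermitian.eigenvectorUnitary).2
    rw [Matrix.star_eq_conjTranspose, Matrix.conjTranspose_eq_transpose_of_trivial] at h1
    exact h1
  have hU2 : Uᵀ * U = 1 := by
    have h2 := Matrix.mem_unitaryGroup_iff'.mp (hC.isHermitian.eigenvectorUnitary).2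
    rw [Matrix.star_eq_conjTranspose, Matrix.conjTranspose_eq_transpose_of_trivial] at h2
    exact h2
  have hspec : C = U * diagonal lam * Uᵀ := by
    have h := hC.isHermitian.spectral_theorem
    simpa [hU_def, hlam_def, Matrix.star_eq_conjTranspose,
      Matrix.conjTranspose_eq_transpose_of_trivial] using h
  have h1t : ∀ i, (0:ℝ) < 1 + t * lam i := fun i => by nlinarith [hlam i]
  set μ : Fin d → ℝ := fun i => lam i / (1 + t * lam i) with hμ_def
  have hμpos : ∀ i, 0 < μ i := fun i => div_pos (hlam i) (h1t i)
  have hμΛ : ∀ i, μ i ≤ Λ := by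
    intro i
    refine le_trans ?_ (heig i)
    rw [hμ_def]
    calc lam i / (1 + t * lam i) ≤ lam i / 1 := by
          apply div_le_div_of_nonneg_left (hlam i).le one_pos
          nlinarith [hlam i]
      _ = lam i := div_one _
  -- the inverse matrix A and trace
  have hone : (1 : Matrix (Fin d) (Fin d) ℝ) + t • C
      = U * diagonal (fun i => 1 + t * lam i) * Uᵀ := by
    conv_lhs => rw [hspec]
    exact one_add_smul_eq U lam t hU1
  have hA : (1 + t • C)⁻¹ = U * diagonal (fun i => (1 + t * lam i)⁻¹) * Uᵀ := by
    rw [hone]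
    exact conj_inv' U hU1 hU2 _ (fun i => (h1t i).ne')
  have hCinv : C⁻¹ = U * diagonal (fun i => (lam i)⁻¹) * Uᵀ := by
    conv_lhs => rw [hspec]
    exact conj_inv' U hU1 hU2 _ (fun i => (hlam i).ne')
  have htr : ((1 + t • C)⁻¹ * C).trace = ∑ i, μ i := by
    rw [hA]
    conv_lhs => rw [hspec]
    rw [conj_diag_mul U hU2, trace_conj U hU2]
    exact Finset.sum_congr rfl fun i _ => by rw [hμ_def]; field_simp
  -- the square root matrix
  set S : Matrix (Fin d) (Fin d) ℝ := diagonal (fun i => Real.sqrt (lam i)) with hS_def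
  set M : Matrix (Fin d) (Fin d) ℝ := U * S with hM_def
  have hMt : Mᵀ = S * Uᵀ := by
    rw [hM_def, Matrix.transpose_mul, hS_def, diagonal_transpose]
  have hconjM : ∀ f : Fin d → ℝ, Mᵀ * (U * diagonal f * Uᵀ) * M
      = diagonal (fun i => Real.sqrt (lam i) * f i * Real.sqrt (lam i)) := by
    intro f
    rw [hMt, hM_def]
    calc S * Uᵀ * (U * diagonal f * Uᵀ) * (U * S)
        = S * ((Uᵀ * U) * (diagonal f * ((Uᵀ * U) * S))) := by
          simp only [Matrix.mul_assoc]
      _ = S * (diagonal f * S) := by rw [hU2, Matrix.one_mul, Matrix.one_mul]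
      _ = diagonal (fun i => Real.sqrt (lam i) * f i * Real.sqrt (lam i)) := by
        rw [hS_def, diagonal_mul_diagonal, diagonal_mul_diagonal]
        exact congrArg Matrix.diagonal (funext fun i => by ring)
  have hsqrt_mul : ∀ (i : Fin d) (a : ℝ),
      Real.sqrt (lam i) * a * Real.sqrt (lam i) = lam i * a := by
    intro i a
    calc Real.sqrt (lam i) * a * Real.sqrt (lam i)
        = Real.sqrt (lam i) * Real.sqrt (lam i) * a := by ring
      _ = lam i * a := by rw [Real.mul_self_sqrt (hlam i).le]
  have hMAM : Mᵀ * (1 + t • C)⁻¹ * M = diagonal μ := by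
    rw [hA, hconjM]
    refine congrArg Matrix.diagonal (funext fun i => ?_)
    rw [hsqrt_mul i]
    simp only [hμ_def]
    rw [div_eq_mul_inv]
  have hMCM : Mᵀ * C⁻¹ * M = 1 := by
    rw [hCinv, hconjM, ← diagonal_one]
    refine congrArg Matrix.diagonal (funext fun i => ?_)
    rw [hsqrt_mul i, mul_inv_cancel₀ (hlam i).ne']
  -- determinants
  have hdetC : C.det = ∏ i, lam i := by
    simpa [hlam_def] using hC.isHermitian.det_eq_prod_eigenvalues
  have habsdetU : |U.det| = 1 := by
    have hdetU : U.det * U.det = 1 := by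
      have := congrArg Matrix.det hU1
      rwa [Matrix.det_mul, Matrix.det_transpose, Matrix.det_one] at this
    have h2 : |U.det| * |U.det| = 1 := by rw [← abs_mul, hdetU, abs_one]
    nlinarith [abs_nonneg U.det]
  have habsdetM : |M.det| = ∏ i, Real.sqrt (lam i) := by
    rw [hM_def, Matrix.det_mul, abs_mul, habsdetU, one_mul, hS_def, det_diagonal]
    exact abs_of_nonneg (Finset.prod_nonneg fun i _ => Real.sqrt_nonneg _)
  have hdetM_ne : M.det ≠ 0 := by
    intro h
    rw [h, abs_zero] at habsdetM
    exact absurd habsdetM.symm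
      (ne_of_gt (Finset.prod_pos fun i _ => Real.sqrt_pos.mpr (hlam i)))
  -- density identity
  have hdens : ∀ z : Fin d → ℝ,
      gaussDensity d C (M *ᵥ z) * |M.det| = ∏ i, stdGauss (z i) := by
    intro z
    have hq : (M *ᵥ z) ⬝ᵥ (C⁻¹ *ᵥ (M *ᵥ z)) = ∑ i, z i ^ 2 := by
      rw [quad_form_eq M C⁻¹ z, hMCM, Matrix.one_mulVec]
      simp [dotProduct, pow_two]
    have hexp : Real.exp (-(1/2 : ℝ) * ∑ i, z i ^ 2)
        = ∏ i, Real.exp (-(1/2 : ℝ) * z i ^ 2) := by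
      rw [← Real.exp_sum]
      congr 1
      rw [Finset.mul_sum]
    have hK : ((2 * π) ^ d * C.det) ^ (-(1/2 : ℝ)) * (∏ i, Real.sqrt (lam i))
        = ∏ _i : Fin d, (Real.sqrt (2 * π))⁻¹ := by
      have h1 : (2 * π) ^ d * C.det = ∏ i : Fin d, (2 * π * lam i) := by
        rw [hdetC, Finset.prod_mul_distrib, Finset.prod_const, Finset.card_univ,
          Fintype.card_fin]
      rw [h1, ← Real.finset_prod_rpow _ _ (fun i _ => by have := hlam i; positivity),
        ← Finset.prod_mul_distrib]
      refine Finset.prod_congr rfl fun i _ => ?_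
      have hl := hlam i
      rw [Real.rpow_neg (by positivity), Real.mul_rpow (by positivity) hl.le,
        Real.sqrt_eq_rpow, Real.sqrt_eq_rpow]
      have h2 : (lam i) ^ ((1:ℝ)/2) ≠ 0 := by positivity
      have h3 : (2 * π) ^ ((1:ℝ)/2) ≠ 0 := by positivity
      field_simp
    calc gaussDensity d C (M *ᵥ z) * |M.det|
        = (((2 * π) ^ d * C.det) ^ (-(1/2 : ℝ)) * (∏ i, Real.sqrt (lam i)))
          * Real.exp (-(1/2 : ℝ) * ∑ i, z i ^ 2) := by
          rw [gaussDensity, habsdetM, hq]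
          push_cast
          ring_nf
      _ = (∏ _i : Fin d, (Real.sqrt (2 * π))⁻¹) * ∏ i, Real.exp (-(1/2 : ℝ) * z i ^ 2) := by
          rw [hK, hexp]
      _ = ∏ i, stdGauss (z i) := by
          rw [← Finset.prod_mul_distrib]
          exact Finset.prod_congr rfl fun i _ => rfl
  -- quadratic form identity
  have hquad : ∀ z : Fin d → ℝ,
      (M *ᵥ z) ⬝ᵥ ((1 + t • C)⁻¹ *ᵥ (M *ᵥ z)) = ∑ i, μ i * z i ^ 2 := by
    intro z
    rw [quad_form_eq M _ z, hMAM, dot_diag]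
  -- the integrand
  set F : (Fin d → ℝ) → ℝ := fun x =>
    ((1 / (d : ℝ)) * (x ⬝ᵥ ((1 + t • C)⁻¹).mulVec x)
      - (1 / (d : ℝ)) * ((1 + t • C)⁻¹ * C).trace) ^ 2 * gaussDensity d C x with hF_def
  have hcontF : Continuous F := by
    rw [hF_def]
    refine Continuous.mul ?_ ?_
    · exact ((continuous_const.mul (cont_quad _)).sub continuous_const).pow 2
    · exact continuous_const.mul (Real.continuous_exp.comp
        (continuous_const.mul (cont_quad _)))
  -- change of variables
  have hcov : ∫ x, F x = |M.det| * ∫ z, F (M *ᵥ z) := by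
    have hmap := Real.map_matrix_volume_pi_eq_smul_volume_pi (M := M) hdetM_ne
    have hTcont : Continuous (Matrix.toLin' M) := LinearMap.continuous_on_pi _
    calc ∫ x, F x
        = ∫ x, F x ∂(ENNReal.ofReal |M.det| • Measure.map (Matrix.toLin' M) volume) := by
          rw [hmap, smul_smul, ← ENNReal.ofReal_mul (abs_nonneg _), ← abs_mul,
            mul_inv_cancel₀ hdetM_ne, abs_one, ENNReal.ofReal_one, one_smul]
      _ = |M.det| * ∫ x, F x ∂(Measure.map (⇑(Matrix.toLin' M)) volume) := by
          rw [integral_smul_measure, ENNReal.toReal_ofReal (abs_nonneg _), smul_eq_mul]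
      _ = |M.det| * ∫ z, F (M *ᵥ z) := by
          rw [integral_map hTcont.measurable.aemeasurable hcontF.aestronglyMeasurable]
          simp_rw [Matrix.toLin'_apply]
  -- pointwise identity after change of variables
  have hpt : ∀ z : Fin d → ℝ, F (M *ᵥ z) * |M.det|
      = (1 / (d : ℝ)) ^ 2 * ((∑ i, μ i * (z i ^ 2 - 1)) ^ 2 * ∏ i, stdGauss (z i)) := by
    intro z
    rw [hF_def]
    simp only
    rw [show ((M *ᵥ z) ⬝ᵥ ((1 + t • C)⁻¹).mulVec (M *ᵥ z)) = ∑ i, μ i * z i ^ 2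
      from hquad z, htr, mul_assoc, hdens z]
    have hsub : ∑ i, μ i * (z i ^ 2 - 1) = (∑ i, μ i * z i ^ 2) - ∑ i, μ i := by
      rw [← Finset.sum_sub_distrib]
      exact Finset.sum_congr rfl fun i _ => by ring
    rw [hsub]
    ring
  -- component functions for the product integrals
  set h : Fin d → Fin d → Fin d → ℝ → ℝ := fun i j k s =>
    (if k = i then s ^ 2 - 1 else 1) * (if k = j then s ^ 2 - 1 else 1) * stdGauss s
    with hh_def
  have hint_h : ∀ i j k, Integrable (h i j k) := by
    intro i j k
    rcases eq_or_ne k i with hki | hki <;> rcases eq_or_ne k j with hkj | hkj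
    · exact stdGauss_int2.congr (Filter.Eventually.of_forall fun s => by
        simp only [hh_def, if_pos hki, if_pos hkj]; ring)
    · exact stdGauss_int1.congr (Filter.Eventually.of_forall fun s => by
        simp only [hh_def, if_pos hki, if_neg hkj, mul_one])
    · exact stdGauss_int1.congr (Filter.Eventually.of_forall fun s => by
        simp only [hh_def, if_neg hki, if_pos hkj, one_mul])
    · exact stdGauss_int.congr (Filter.Eventually.of_forall fun s => by
        simp only [hh_def, if_neg hki, if_neg hkj, one_mul])
  have hI : ∀ i j, (∫ z : Fin d → ℝ, ∏ k, h i j k (z k)) = if i = j then 2 else 0 := by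
    intro i j
    rw [MeasureTheory.integral_fintype_prod_volume_eq_prod (h i j)]
    rcases eq_or_ne i j with rfl | hij
    · rw [if_pos rfl]
      rw [Finset.prod_eq_single i (fun k _ hk => ?_) (fun hmem => absurd (Finset.mem_univ i) hmem)]
      · have heq : ∀ s : ℝ, h i i i s = (s ^ 2 - 1) ^ 2 * stdGauss s := fun s => by
          simp only [hh_def, eq_self_iff_true, if_true]; ring
        simp only [heq]
        exact stdGauss_I2
      · have heq : ∀ s : ℝ, h i i k s = stdGauss s := fun s => by
          simp only [hh_def, if_neg hk, one_mul]
        simp only [heq]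
        exact stdGauss_I0
    · rw [if_neg hij]
      apply Finset.prod_eq_zero (Finset.mem_univ i)
      have heq : ∀ s : ℝ, h i j i s = (s ^ 2 - 1) * stdGauss s := fun s => by
        simp only [hh_def, eq_self_iff_true, if_true, if_neg hij, mul_one]
      simp only [heq]
      exact stdGauss_I1
  have hprod : ∀ i j (z : Fin d → ℝ),
      (μ i * (z i ^ 2 - 1)) * (μ j * (z j ^ 2 - 1)) * (∏ k, stdGauss (z k))
        = (μ i * μ j) * ∏ k, h i j k (z k) := by
    intro i j z
    have hsplit : ∏ k, h i j k (z k)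
        = (z i ^ 2 - 1) * ((z j ^ 2 - 1) * ∏ k, stdGauss (z k)) := by
      simp only [hh_def]
      rw [Finset.prod_mul_distrib, Finset.prod_mul_distrib]
      have e1 : (∏ k, if k = i then z k ^ 2 - 1 else 1) = z i ^ 2 - 1 := by
        rw [Finset.prod_ite_eq' Finset.univ i (fun k => z k ^ 2 - 1)]
        simp
      have e2 : (∏ k, if k = j then z k ^ 2 - 1 else 1) = z j ^ 2 - 1 := by
        rw [Finset.prod_ite_eq' Finset.univ j (fun k => z k ^ 2 - 1)]
        simp
      rw [e1, e2, mul_assoc]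
    rw [hsplit]
    ring
  have hintij : ∀ i j, Integrable (fun z : Fin d → ℝ => (μ i * μ j) * ∏ k, h i j k (z k)) :=
    fun i j => (Integrable.fintype_prod (f := h i j) (fun k => hint_h i j k)).const_mul _
  have hbig : ∫ z : Fin d → ℝ, (∑ i, μ i * (z i ^ 2 - 1)) ^ 2 * ∏ i, stdGauss (z i)
      = ∑ i : Fin d, ∑ j : Fin d, (μ i * μ j) * (if i = j then 2 else 0) := by
    have hptw : ∀ z : Fin d → ℝ, (∑ i, μ i * (z i ^ 2 - 1)) ^ 2 * ∏ k, stdGauss (z k)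
        = ∑ i, ∑ j, (μ i * μ j) * ∏ k, h i j k (z k) := by
      intro z
      rw [sq, Finset.sum_mul_sum, Finset.sum_mul]
      refine Finset.sum_congr rfl fun i _ => ?_
      rw [Finset.sum_mul]
      exact Finset.sum_congr rfl fun j _ => hprod i j z
    simp_rw [hptw]
    rw [integral_finset_sum _ (fun i _ => integrable_finset_sum _ (fun j _ => hintij i j))]
    refine Finset.sum_congr rfl fun i _ => ?_
    rw [integral_finset_sum _ (fun j _ => hintij i j)]
    refine Finset.sum_congr rfl fun j _ => ?_
    rw [integral_const_mul, hI i j]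
  have hsum2 : (∑ i : Fin d, ∑ j : Fin d, (μ i * μ j) * (if i = j then 2 else 0))
      = ∑ i, 2 * μ i ^ 2 := by
    refine Finset.sum_congr rfl fun i _ => ?_
    rw [Finset.sum_eq_single i (fun j _ hji => by rw [if_neg (Ne.symm hji), mul_zero])
      (fun hmem => absurd (Finset.mem_univ i) hmem)]
    rw [if_pos rfl]
    ring
  -- put everything together
  have hsumbound : (∑ i, 2 * μ i ^ 2) ≤ (d : ℝ) * (2 * Λ ^ 2) := by
    calc (∑ i, 2 * μ i ^ 2) ≤ ∑ _i : Fin d, 2 * Λ ^ 2 := by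
          refine Finset.sum_le_sum fun i _ => ?_
          have h1 := hμpos i
          have h2 := hμΛ i
          nlinarith
      _ = (d : ℝ) * (2 * Λ ^ 2) := by
          rw [Finset.sum_const, Finset.card_univ, Fintype.card_fin, nsmul_eq_mul]
  show ∫ x, F x ≤ 2 * Λ ^ 2 / (d : ℝ)
  rw [hcov, mul_comm, ← integral_mul_const]
  simp_rw [hpt]
  rw [integral_const_mul, hbig, hsum2]
  calc (1 / (d : ℝ)) ^ 2 * (∑ i, 2 * μ i ^ 2)
      ≤ (1 / (d : ℝ)) ^ 2 * ((d : ℝ) * (2 * Λ ^ 2)) := by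
        exact mul_le_mul_of_nonneg_left hsumbound (by positivity)
    _ = 2 * Λ ^ 2 / (d : ℝ) := by
        field_simp
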